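/- arXiv:1103.1330 — 4 statements merged into one kernel-verified Lean document; each statement's English description precedes it below -/
import Mathlib

section
/- For all 0 < p, q < ∞ and 0 < r, e < ∞, the Lorentz sequence space ℓ_{p,r+e} is strictly contained in ℓ_{q,r}. -/
/-- `rearr a n` is the `(n+1)`-st term `a*_{n+1}` of the non-increasing
rearrangement of `(|a m|)`. -/
noncomputable def rearr (a : ℕ → ℝ) (n : ℕ) : ℝ :=
  sInf {t : ℝ | 0 ≤ t ∧ {m : ℕ | t < |a m|}.Finite ∧ Nat.card {m : ℕ | t < |a m|} ≤ n}

/-- Membership in the Lorentz sequence space `ℓ_{p,r}`:  bounded sequences with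
`∑_{n=1}^∞ n^{rp-1}(a_n^*)^p < ∞`. -/
def MemLorentz (p r : ℝ) (a : ℕ → ℝ) : Prop :=
  (∃ M, ∀ n, |a n| ≤ M) ∧
    Summable (fun n : ℕ => ((n : ℝ) + 1) ^ (r * p - 1) * rearr a n ^ p)

lemma rearr_nonneg (a : ℕ → ℝ) (n : ℕ) : 0 ≤ rearr a n :=
  Real.sInf_nonneg (fun _ ht => ht.1)

lemma rearr_mem {a : ℕ → ℝ} {M : ℝ} (hM : ∀ n, |a n| ≤ M) (n : ℕ) :
    M ∈ {t : ℝ | 0 ≤ t ∧ {m : ℕ | t < |a m|}.Finite ∧ Nat.card {m : ℕ | t < |a m|} ≤ n} := by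
  have h0 : (0:ℝ) ≤ M := le_trans (abs_nonneg _) (hM 0)
  have hempty : {m : ℕ | M < |a m|} = ∅ := by
    ext m; simp only [Set.mem_setOf_eq, Set.mem_empty_iff_false, iff_false, not_lt]; exact hM m
  refine ⟨h0, ?_, ?_⟩ <;> rw [hempty] <;> simp

lemma rearr_anti {a : ℕ → ℝ} {M : ℝ} (hM : ∀ n, |a n| ≤ M) {n m : ℕ} (h : n ≤ m) :
    rearr a m ≤ rearr a n := by
  apply csInf_le_csInf ⟨0, fun t ht => ht.1⟩ ⟨M, rearr_mem hM n⟩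
  rintro t ⟨h0, hfin, hcard⟩
  exact ⟨h0, hfin, hcard.trans h⟩

lemma summable_rpow_shift {s : ℝ} (hs : s < -1) : Summable (fun n : ℕ => ((n:ℝ)+1) ^ s) := by
  have h1 : Summable (fun n : ℕ => ((n:ℝ))^s) := Real.summable_nat_rpow.2 hs
  have h2 := (summable_nat_add_iff 1).2 h1
  refine h2.congr fun n => ?_
  push_cast
  ring_nf

lemma not_summable_rpow_shift {s : ℝ} (hs : -1 ≤ s) :
    ¬ Summable (fun n : ℕ => ((n:ℝ)+1) ^ s) := by
  intro h
  have h2 : Summable (fun n : ℕ => ((n:ℝ))^s) := by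
    rw [← summable_nat_add_iff 1]
    refine h.congr fun n => ?_
    push_cast
    ring_nf
  exact absurd (Real.summable_nat_rpow.1 h2) (not_lt.2 hs)

lemma key_bound {g : ℕ → ℝ} (hg0 : ∀ n, 0 ≤ g n) (hganti : ∀ ⦃n m : ℕ⦄, n ≤ m → g m ≤ g n)
    {p β : ℝ} (hp : 0 < p) (hβ : 0 < β)
    (hsum : Summable (fun n : ℕ => ((n:ℝ)+1)^(β-1) * g n ^ p)) :
    ∃ D : ℝ, 0 ≤ D ∧ ∀ n : ℕ, g n ^ p ≤ D * ((n:ℝ)+1)^(-β) := by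
  set c : ℝ := min 1 ((2:ℝ)^(1-β)) with hc
  have hc0 : 0 < c := lt_min one_pos (Real.rpow_pos_of_pos two_pos _)
  set S := ∑' n : ℕ, ((n:ℝ)+1)^(β-1) * g n ^ p with hS
  have hterm : ∀ n : ℕ, 0 ≤ ((n:ℝ)+1)^(β-1) * g n ^ p := fun n =>
    mul_nonneg (Real.rpow_nonneg (by positivity) _) (Real.rpow_nonneg (hg0 n) _)
  have hS0 : 0 ≤ S := tsum_nonneg hterm
  have hmain : ∀ n : ℕ, c/2 * ((2*(n:ℝ)+2)^β) * g (2*n+1) ^ p ≤ S := by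
    intro n
    set y : ℝ := 2*(n:ℝ)+2 with hy
    have hy0 : (0:ℝ) < y := by positivity
    have hsum' : ∑ k ∈ Finset.Ico (n+1) (2*n+2), ((k:ℝ)+1)^(β-1) * g k ^ p ≤ S :=
      Summable.sum_le_tsum _ (fun k _ => hterm k) hsum
    refine le_trans ?_ hsum'
    have hlow : ∀ k ∈ Finset.Ico (n+1) (2*n+2),
        c * (y^(β-1)) * g (2*n+1) ^ p ≤ ((k:ℝ)+1)^(β-1) * g k ^ p := by
      intro k hk
      rw [Finset.mem_Ico] at hk
      have hgk : g (2*n+1) ^ p ≤ g k ^ p :=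
        Real.rpow_le_rpow (hg0 _) (hganti (by omega)) hp.le
      have hg2 : 0 ≤ g (2*n+1) ^ p := Real.rpow_nonneg (hg0 _) _
      have hx0 : (0:ℝ) < (k:ℝ)+1 := by positivity
      have hx1 : y/2 ≤ (k:ℝ)+1 := by
        have : (n:ℝ) + 1 ≤ (k:ℝ) := by exact_mod_cast hk.1
        rw [hy]; linarith
      have hx2 : (k:ℝ)+1 ≤ y := by
        have h' : k ≤ 2*n+1 := by omega
        have : (k:ℝ) ≤ 2*(n:ℝ)+1 := by exact_mod_cast h'
        rw [hy]; linarith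
      have hbase : c * y^(β-1) ≤ ((k:ℝ)+1)^(β-1) := by
        rcases le_total β 1 with hβ1 | hβ1
        · have h1 : y^(β-1) ≤ ((k:ℝ)+1)^(β-1) :=
            Real.rpow_le_rpow_of_nonpos hx0 hx2 (by linarith)
          have h2 : c * y^(β-1) ≤ 1 * y^(β-1) :=
            mul_le_mul_of_nonneg_right (min_le_left _ _) (Real.rpow_nonneg hy0.le _)
          linarith
        · have hhalf : (y/2)^(β-1) = (2:ℝ)^(1-β) * y^(β-1) := by
            rw [div_eq_mul_inv, Real.mul_rpow hy0.le (by norm_num),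
              Real.inv_rpow (by norm_num : (0:ℝ) ≤ 2), ← Real.rpow_neg (by norm_num : (0:ℝ) ≤ 2),
              neg_sub]
            ring
          have h1 : (y/2)^(β-1) ≤ ((k:ℝ)+1)^(β-1) :=
            Real.rpow_le_rpow (by positivity) hx1 (by linarith)
          have h2 : c * y^(β-1) ≤ (2:ℝ)^(1-β) * y^(β-1) :=
            mul_le_mul_of_nonneg_right (min_le_right _ _) (Real.rpow_nonneg hy0.le _)
          rw [hhalf] at h1
          linarith
      calc c * (y^(β-1)) * g (2*n+1) ^ p ≤ ((k:ℝ)+1)^(β-1) * g (2*n+1) ^ p :=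
            mul_le_mul_of_nonneg_right hbase hg2
        _ ≤ ((k:ℝ)+1)^(β-1) * g k ^ p :=
            mul_le_mul_of_nonneg_left hgk (Real.rpow_nonneg hx0.le _)
    have hsumlow := Finset.sum_le_sum hlow
    rw [Finset.sum_const, Nat.card_Ico, show 2*n+2-(n+1) = n+1 by omega,
      nsmul_eq_mul, Nat.cast_add, Nat.cast_one] at hsumlow
    refine le_trans (le_of_eq ?_) hsumlow
    rw [show β = (β-1)+1 by ring, Real.rpow_add_one hy0.ne', hy]
    ring_nf
  refine ⟨max (2*S/c * (2:ℝ)^β) (g 0 ^ p), le_max_of_le_right (Real.rpow_nonneg (hg0 0) _), ?_⟩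
  intro m
  rcases Nat.eq_zero_or_pos m with hm | hm
  · subst hm
    simp only [Nat.cast_zero, zero_add, Real.one_rpow, mul_one]
    exact le_max_right _ _
  · set n := (m-1)/2 with hn
    have h1 : 2*n+1 ≤ m := by omega
    have h2 : m ≤ 2*n+2 := by omega
    set y : ℝ := 2*(n:ℝ)+2 with hy
    have hy0 : (0:ℝ) < y := by positivity
    have hstep : g m ^ p ≤ g (2*n+1) ^ p :=
      Real.rpow_le_rpow (hg0 _) (hganti h1) hp.le
    have hA : (0:ℝ) < c/2 * y^β := by positivity
    have hmain' : g (2*n+1) ^ p ≤ S / (c/2 * y^β) := by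
      rw [le_div_iff₀ hA]
      calc g (2*n+1) ^ p * (c/2 * y^β) = c/2 * y^β * g (2*n+1) ^ p := by ring
        _ ≤ S := hmain n
    have hxm : (0:ℝ) < (m:ℝ)+1 := by positivity
    have hmy : ((m:ℝ)+1)/2 ≤ y := by
      have : (m:ℝ) ≤ 2*(n:ℝ)+2 := by exact_mod_cast h2
      rw [hy]; nlinarith [Nat.cast_nonneg (α := ℝ) n]
    have hySle : S / (c/2 * y^β) ≤ 2*S/c * y^(-β) := by
      rw [Real.rpow_neg hy0.le]
      rw [div_le_iff₀ hA]
      have hyβ : (0:ℝ) < y^β := Real.rpow_pos_of_pos hy0 _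
      field_simp
      exact le_rfl
    have hS2c : (0:ℝ) ≤ 2*S/c := by positivity
    have hmono : y^(-β) ≤ (((m:ℝ)+1)/2)^(-β) :=
      Real.rpow_le_rpow_of_nonpos (by positivity) hmy (by linarith)
    have heq : (((m:ℝ)+1)/2)^(-β) = (2:ℝ)^β * ((m:ℝ)+1)^(-β) := by
      rw [div_eq_mul_inv, Real.mul_rpow hxm.le (by norm_num),
        Real.inv_rpow (by norm_num : (0:ℝ) ≤ 2), ← Real.rpow_neg (by norm_num : (0:ℝ) ≤ 2),
        neg_neg]
      ring
    calc g m ^ p ≤ g (2*n+1) ^ p := hstep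
      _ ≤ S / (c/2 * y^β) := hmain'
      _ ≤ 2*S/c * y^(-β) := hySle
      _ ≤ 2*S/c * ((2:ℝ)^β * ((m:ℝ)+1)^(-β)) := by
          rw [← heq]; exact mul_le_mul_of_nonneg_left hmono hS2c
      _ = (2*S/c * (2:ℝ)^β) * ((m:ℝ)+1)^(-β) := by ring
      _ ≤ max (2*S/c * (2:ℝ)^β) (g 0 ^ p) * ((m:ℝ)+1)^(-β) :=
          mul_le_mul_of_nonneg_right (le_max_left _ _) (Real.rpow_nonneg hxm.le _)

lemma rearr_model {s : ℝ} (hs : 0 < s) (n : ℕ) :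
    rearr (fun m => ((m:ℝ)+1)^(-s)) n = ((n:ℝ)+1)^(-s) := by
  set b : ℕ → ℝ := fun m => ((m:ℝ)+1)^(-s) with hb
  have hbpos : ∀ m, 0 < b m := fun m => Real.rpow_pos_of_pos (by positivity) _
  have habs : ∀ m, |b m| = b m := fun m => abs_of_pos (hbpos m)
  have hanti : ∀ {m k : ℕ}, m ≤ k → b k ≤ b m := by
    intro m k h
    exact Real.rpow_le_rpow_of_nonpos (by positivity)
      (by linarith [(by exact_mod_cast h : (m:ℝ) ≤ k)]) (by linarith)
  have hsub : ∀ t : ℝ, b n ≤ t → {m : ℕ | t < |b m|} ⊆ Set.Iio n := by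
    intro t ht m hm
    simp only [Set.mem_setOf_eq, habs] at hm
    by_contra hcon
    rw [Set.mem_Iio, not_lt] at hcon
    exact absurd (lt_of_le_of_lt ht hm) (not_lt.2 (hanti hcon))
  have hmem : ∀ t : ℝ, b n ≤ t →
      t ∈ {t : ℝ | 0 ≤ t ∧ {m : ℕ | t < |b m|}.Finite ∧ Nat.card {m : ℕ | t < |b m|} ≤ n} := by
    intro t ht
    have hfin : {m : ℕ | t < |b m|}.Finite := (Set.finite_Iio n).subset (hsub t ht)
    refine ⟨le_trans (hbpos n).le ht, hfin, ?_⟩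
    rw [Nat.card_coe_set_eq]
    calc {m : ℕ | t < |b m|}.ncard ≤ (Set.Iio n).ncard :=
          Set.ncard_le_ncard (hsub t ht) (Set.finite_Iio n)
      _ = n := by rw [← Finset.coe_range, Set.ncard_coe_finset, Finset.card_range]
  apply le_antisymm
  · exact csInf_le ⟨0, fun t ht => ht.1⟩ (hmem _ le_rfl)
  · apply le_csInf ⟨b n, hmem _ le_rfl⟩
    rintro t ⟨ht0, htfin, htcard⟩
    by_contra hcon
    push_neg at hcon
    have hIic : Set.Iic n ⊆ {m : ℕ | t < |b m|} := by
      intro m hm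
      rw [Set.mem_Iic] at hm
      simp only [Set.mem_setOf_eq, habs]
      exact lt_of_lt_of_le hcon (hanti hm)
    have : n + 1 ≤ Nat.card {m : ℕ | t < |b m|} := by
      rw [Nat.card_coe_set_eq]
      calc n + 1 = (Set.Iic n).ncard := by
            rw [show Set.Iic n = Set.Iio (n+1) by ext; simp [Nat.lt_succ_iff],
              ← Finset.coe_range, Set.ncard_coe_finset, Finset.card_range]
        _ ≤ _ := Set.ncard_le_ncard hIic htfin
    omega

theorem stmt_2 (p q r e : ℝ) (hp : 0 < p) (hq : 0 < q) (hr : 0 < r) (he : 0 < e) :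
    {a : ℕ → ℝ | MemLorentz p (r + e) a} ⊂ {a : ℕ → ℝ | MemLorentz q r a} := by
  rw [Set.ssubset_def]
  constructor
  · -- inclusion
    rintro a ⟨⟨M, hM⟩, hsum⟩
    refine ⟨⟨M, hM⟩, ?_⟩
    have hβ : (0:ℝ) < (r+e)*p := by positivity
    obtain ⟨D, hD0, hDb⟩ := key_bound (rearr_nonneg a)
      (fun n m h => rearr_anti hM h) hp hβ hsum
    have hqp : (0:ℝ) ≤ q/p := by positivity
    have hle : ∀ n : ℕ, ((n:ℝ)+1)^(r*q-1) * rearr a n ^ q ≤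
        D^(q/p) * ((n:ℝ)+1)^(-(e*q)-1) := by
      intro n
      have hx0 : (0:ℝ) < (n:ℝ)+1 := by positivity
      have h1 : rearr a n ^ q = (rearr a n ^ p) ^ (q/p) := by
        rw [← Real.rpow_mul (rearr_nonneg a n)]
        congr 1
        field_simp
      have h2 : (rearr a n ^ p) ^ (q/p) ≤ (D * ((n:ℝ)+1)^(-((r+e)*p))) ^ (q/p) :=
        Real.rpow_le_rpow (Real.rpow_nonneg (rearr_nonneg a n) _) (hDb n) hqp
      have h3 : (D * ((n:ℝ)+1)^(-((r+e)*p))) ^ (q/p)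
          = D^(q/p) * ((n:ℝ)+1)^(-((r+e)*q)) := by
        rw [Real.mul_rpow hD0 (Real.rpow_nonneg hx0.le _),
          ← Real.rpow_mul hx0.le]
        congr 2
        field_simp
      calc ((n:ℝ)+1)^(r*q-1) * rearr a n ^ q
          ≤ ((n:ℝ)+1)^(r*q-1) * (D^(q/p) * ((n:ℝ)+1)^(-((r+e)*q))) := by
            rw [h1, ← h3]
            exact mul_le_mul_of_nonneg_left h2 (Real.rpow_nonneg hx0.le _)
        _ = D^(q/p) * (((n:ℝ)+1)^(r*q-1) * ((n:ℝ)+1)^(-((r+e)*q))) := by ring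
        _ = D^(q/p) * ((n:ℝ)+1)^(-(e*q)-1) := by
            rw [← Real.rpow_add hx0]
            congr 2
            ring
    have hsummaj : Summable (fun n : ℕ => D^(q/p) * ((n:ℝ)+1)^(-(e*q)-1)) :=
      (summable_rpow_shift (by nlinarith : -(e*q)-1 < -1)).mul_left _
    refine Summable.of_nonneg_of_le (fun n => ?_) hle hsummaj
    exact mul_nonneg (Real.rpow_nonneg (by positivity) _)
      (Real.rpow_nonneg (rearr_nonneg a n) _)
  · -- strictness
    intro hcon
    set s : ℝ := r + e/2 with hsdef
    have hs : 0 < s := by positivity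
    set b : ℕ → ℝ := fun m => ((m:ℝ)+1)^(-s) with hb
    have hexp : ∀ (u v : ℝ), ∀ n : ℕ,
        ((n:ℝ)+1)^u * (((n:ℝ)+1)^(-s))^v = ((n:ℝ)+1)^(u + (-s)*v) := by
      intro u v n
      have hx0 : (0:ℝ) < (n:ℝ)+1 := by positivity
      rw [← Real.rpow_mul hx0.le, ← Real.rpow_add hx0]
    have hbq : MemLorentz q r b := by
      constructor
      · refine ⟨1, fun m => ?_⟩
        rw [abs_of_pos (Real.rpow_pos_of_pos (by positivity) _)]
        apply Real.rpow_le_one_of_one_le_of_nonpos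
        · have : (0:ℝ) ≤ (m:ℝ) := Nat.cast_nonneg m
          linarith
        · linarith
      · refine (summable_rpow_shift (show r*q-1 + (-s)*q < -1 by rw [hsdef]; nlinarith)).congr
          fun n => ?_
        rw [hb, rearr_model hs n, hexp]
    have hbp : ¬ MemLorentz p (r+e) b := by
      rintro ⟨-, hsum⟩
      have : Summable (fun n : ℕ => ((n:ℝ)+1)^((r+e)*p-1 + (-s)*p)) := by
        refine hsum.congr fun n => ?_
        rw [hb, rearr_model hs n, hexp]
      exact not_summable_rpow_shift (show (-1:ℝ) ≤ (r+e)*p-1 + (-s)*p by rw [hsdef]; nlinarith) this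
    exact hbp (hcon hbq)
end

section
/- Let α > 1 and C > 1. Let S be a rearrangement-invariant solid quasi-normed sequence space such that: if (a_n) is non-increasing, non-negative, and (a_{⌈αn⌉}) ∈ S, then (a_n) ∈ S. Then for every non-increasing non-negative sequence (a_n): (a_n) ∈ S if and only if (a_{⌊n/C⌋}) ∈ S. -/
theorem stmt_6 (α C : ℝ) (hα : 1 < α) (hC : 1 < C) (S : Set (ℕ → ℝ))
    -- `S` is solid:
    (h_solid : ∀ a b : ℕ → ℝ, (∀ n, 0 ≤ a n ∧ a n ≤ b n) → b ∈ S → a ∈ S)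
    -- `S` is rearrangement invariant:
    (h_ri : ∀ a : ℕ → ℝ, a ∈ S ↔ rearr a ∈ S)
    -- dilation property of `S` for the jump function `K(n) = αn`:
    (h_dil : ∀ a : ℕ → ℝ, (∀ n, a (n + 1) ≤ a n) → (∀ n, 0 ≤ a n) →
      (fun n : ℕ => a (Nat.ceil (α * n))) ∈ S → a ∈ S) :
    ∀ a : ℕ → ℝ, (∀ n, a (n + 1) ≤ a n) → (∀ n, 0 ≤ a n) →
      (a ∈ S ↔ (fun n : ℕ => a (Nat.floor ((n : ℝ) / C))) ∈ S) := by
  intro a ha hpos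
  have haA : Antitone a := antitone_nat_of_succ_le ha
  have hC0 : (0 : ℝ) < C := lt_trans one_pos hC
  have hα0 : (0 : ℝ) < α := lt_trans one_pos hα
  constructor
  · intro haS
    set g : ℕ → ℕ := fun n => Nat.ceil (α * n) with hg
    have hgmono : Monotone g := by
      intro m n hmn
      exact Nat.ceil_le_ceil
        (mul_le_mul_of_nonneg_left (by exact_mod_cast hmn) hα0.le)
    have hgk_ge : ∀ (k n : ℕ), α ^ k * (n : ℝ) ≤ (g^[k] n : ℝ) := by
      intro k
      induction k with
      | zero => intro n; simp
      | succ k ih =>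
        intro n
        rw [Function.iterate_succ_apply']
        calc α ^ (k + 1) * n = α * (α ^ k * n) := by ring
          _ ≤ α * (g^[k] n : ℝ) := by nlinarith [ih n]
          _ ≤ ((g (g^[k] n)) : ℝ) := Nat.le_ceil _
    -- the dilated sequences
    set c : ℕ → ℕ → ℝ := fun j n => a (Nat.floor ((g^[j] n : ℝ) / C)) with hc
    have hcA : ∀ j, ∀ n, c j (n + 1) ≤ c j n := by
      intro j n
      apply haA
      apply Nat.floor_le_floor
      gcongr
      exact_mod_cast (hgmono.iterate j) (Nat.le_succ n)
    have hcpos : ∀ j n, 0 ≤ c j n := fun j n => hpos _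
    have hdesc : ∀ j, c j ∈ S → c 0 ∈ S := by
      intro j
      induction j with
      | zero => exact id
      | succ j ih =>
        intro hS
        apply ih
        apply h_dil (c j) (hcA j) (hcpos j)
        have : (fun n : ℕ => c j (Nat.ceil (α * n))) = c (j + 1) := by
          funext n
          simp only [hc]
          rw [Function.iterate_succ_apply]
        rw [this]
        exact hS
    obtain ⟨k, hk⟩ := pow_unbounded_of_one_lt C hα
    have hckS : c k ∈ S := by
      apply h_solid (c k) a _ haS
      intro n
      refine ⟨hcpos k n, ?_⟩
      apply haA
      apply Nat.le_floor
      rw [le_div_iff₀ hC0]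
      calc (n : ℝ) * C ≤ n * α ^ k := by
            apply mul_le_mul_of_nonneg_left hk.le (Nat.cast_nonneg n)
        _ = α ^ k * n := by ring
        _ ≤ (g^[k] n : ℝ) := hgk_ge k n
    have := hdesc k hckS
    have h0 : c 0 = fun n : ℕ => a (Nat.floor ((n : ℝ) / C)) := by
      funext n; simp [hc]
    rwa [h0] at this
  · intro hS
    apply h_solid a (fun n : ℕ => a (Nat.floor ((n : ℝ) / C))) _ hS
    intro n
    refine ⟨hpos n, ?_⟩
    apply haA
    calc Nat.floor ((n : ℝ) / C) ≤ Nat.floor (n : ℝ) :=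
          Nat.floor_le_floor (div_le_self (Nat.cast_nonneg n) hC.le)
      _ = n := Nat.floor_natCast n
end

section
/- Let Y be a quasi-semi-normed subspace of a quasi-Banach space X with K-functional K(x,t) = inf_{y∈Y}(‖x−y‖_X + t‖y‖_Y). Suppose there is c > 0 with sup_{‖x‖=1} K(x,t) > c for all t ∈ (0,1]. Then for every sequence (b_n) of non-negative reals with b_n → ∞ and every strictly decreasing positive null sequence (t_n), the set A((b_n),(t_n)) = {x ∈ X : sup_{n≥1} b_n K(x,t_n) < ∞} is a proper subset of X. -/
open Filter Set

/-- The Peetre `K`-functional `K(x,t) = inf_{y ∈ Y} (‖x-y‖_X + t‖y‖_Y)`, where the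
quasi-semi-norm of the subspace `Y` is given by `ν`. -/
noncomputable def Kf {X : Type*} [NormedAddCommGroup X] [NormedSpace ℝ X]
    (Y : Submodule ℝ X) (ν : X → ℝ) (x : X) (t : ℝ) : ℝ :=
  sInf {r : ℝ | ∃ y ∈ Y, r = ‖x - y‖ + t * ν y}

/-- `sup_{‖x‖_X = 1} K(x,t)`. -/
noncomputable def Ksup {X : Type*} [NormedAddCommGroup X] [NormedSpace ℝ X]
    (Y : Submodule ℝ X) (ν : X → ℝ) (t : ℝ) : ℝ :=
  sSup {r : ℝ | ∃ x : X, ‖x‖ = 1 ∧ r = Kf Y ν x t}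

section Aux

variable {X : Type*} [NormedAddCommGroup X] [NormedSpace ℝ X]
  (Y : Submodule ℝ X) (ν : X → ℝ)

lemma Kf_bddBelow (hν0 : ∀ y ∈ Y, 0 ≤ ν y) (x : X) {t : ℝ} (ht : 0 ≤ t) :
    BddBelow {r : ℝ | ∃ y ∈ Y, r = ‖x - y‖ + t * ν y} := by
  refine ⟨0, fun r hr => ?_⟩
  obtain ⟨y, hy, rfl⟩ := hr
  have := hν0 y hy
  positivity

lemma Kf_set_nonempty (x : X) (t : ℝ) :
    {r : ℝ | ∃ y ∈ Y, r = ‖x - y‖ + t * ν y}.Nonempty :=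
  ⟨‖x - 0‖ + t * ν 0, 0, Y.zero_mem, rfl⟩

lemma Kf_le (hν0 : ∀ y ∈ Y, 0 ≤ ν y) {x : X} {t : ℝ} (ht : 0 ≤ t)
    {y : X} (hy : y ∈ Y) : Kf Y ν x t ≤ ‖x - y‖ + t * ν y :=
  csInf_le (Kf_bddBelow Y ν hν0 x ht) ⟨y, hy, rfl⟩

lemma Kf_nonneg (hν0 : ∀ y ∈ Y, 0 ≤ ν y) (x : X) {t : ℝ} (ht : 0 ≤ t) :
    0 ≤ Kf Y ν x t := by
  refine Real.sInf_nonneg fun r hr => ?_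
  obtain ⟨y, hy, rfl⟩ := hr
  have := hν0 y hy
  positivity

lemma nu_zero (hνh : ∀ (c : ℝ), ∀ y ∈ Y, ν (c • y) = |c| * ν y) : ν 0 = 0 := by
  have := hνh 0 0 Y.zero_mem
  simpa using this

lemma Kf_lip (hν0 : ∀ y ∈ Y, 0 ≤ ν y) (x x' : X) {t : ℝ} (ht : 0 ≤ t) :
    Kf Y ν x t ≤ ‖x - x'‖ + Kf Y ν x' t := by
  have key : Kf Y ν x t - ‖x - x'‖ ≤ Kf Y ν x' t := by
    refine le_csInf (Kf_set_nonempty Y ν x' t) ?_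
    rintro r ⟨y, hy, rfl⟩
    have h1 : Kf Y ν x t ≤ ‖x - y‖ + t * ν y := Kf_le Y ν hν0 ht hy
    have h2 : ‖x - y‖ ≤ ‖x - x'‖ + ‖x' - y‖ := by
      have := dist_triangle x x' y
      simpa [dist_eq_norm] using this
    linarith
  linarith

lemma Kf_continuous (hν0 : ∀ y ∈ Y, 0 ≤ ν y) {t : ℝ} (ht : 0 ≤ t) :
    Continuous fun x : X => Kf Y ν x t := by
  refine LipschitzWith.continuous (K := 1) (LipschitzWith.of_dist_le_mul fun x x' => ?_)
  rw [NNReal.coe_one, one_mul, Real.dist_eq, dist_eq_norm, abs_sub_le_iff]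
  constructor
  · have := Kf_lip Y ν hν0 x x' ht; linarith
  · have := Kf_lip Y ν hν0 x' x ht
    rw [norm_sub_rev] at this
    linarith

lemma Kf_smul_le (hν0 : ∀ y ∈ Y, 0 ≤ ν y)
    (hνh : ∀ (c : ℝ), ∀ y ∈ Y, ν (c • y) = |c| * ν y)
    (c : ℝ) (x : X) {t : ℝ} (ht : 0 ≤ t) :
    Kf Y ν (c • x) t ≤ |c| * Kf Y ν x t := by
  rcases eq_or_ne c 0 with rfl | hc
  · simp only [zero_smul, abs_zero, zero_mul]
    have h1 : Kf Y ν (0 : X) t ≤ ‖(0 : X) - 0‖ + t * ν 0 := Kf_le Y ν hν0 ht Y.zero_mem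
    simpa [nu_zero Y ν hνh] using h1
  · have hc' : 0 < |c| := abs_pos.mpr hc
    have key : ∀ r ∈ {r : ℝ | ∃ y ∈ Y, r = ‖x - y‖ + t * ν y},
        Kf Y ν (c • x) t ≤ |c| * r := by
      rintro r ⟨y, hy, rfl⟩
      have h1 : Kf Y ν (c • x) t ≤ ‖c • x - c • y‖ + t * ν (c • y) :=
        Kf_le Y ν hν0 ht (Y.smul_mem c hy)
      rw [← smul_sub, norm_smul, hνh c y hy] at h1
      simp only [Real.norm_eq_abs] at h1
      calc Kf Y ν (c • x) t ≤ |c| * ‖x - y‖ + t * (|c| * ν y) := h1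
        _ = |c| * (‖x - y‖ + t * ν y) := by ring
    have h2 : Kf Y ν (c • x) t / |c| ≤ Kf Y ν x t := by
      refine le_csInf (Kf_set_nonempty Y ν x t) fun r hr => ?_
      rw [div_le_iff₀ hc', mul_comm]
      exact key r hr
    rwa [div_le_iff₀ hc', mul_comm] at h2

lemma Kf_add_le (hν0 : ∀ y ∈ Y, 0 ≤ ν y) {κ : ℝ} (hκ1 : 1 ≤ κ)
    (hνt : ∀ y ∈ Y, ∀ z ∈ Y, ν (y + z) ≤ κ * (ν y + ν z))
    (x x' : X) {t : ℝ} (ht : 0 ≤ t) :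
    Kf Y ν (x + x') t ≤ κ * (Kf Y ν x t + Kf Y ν x' t) := by
  have hκ0 : (0 : ℝ) < κ := lt_of_lt_of_le one_pos hκ1
  have key : ∀ r ∈ {r : ℝ | ∃ y ∈ Y, r = ‖x - y‖ + t * ν y},
      ∀ r' ∈ {r : ℝ | ∃ z ∈ Y, r = ‖x' - z‖ + t * ν z},
      Kf Y ν (x + x') t ≤ κ * (r + r') := by
    rintro r ⟨y, hy, rfl⟩ r' ⟨z, hz, rfl⟩
    have h1 : Kf Y ν (x + x') t ≤ ‖x + x' - (y + z)‖ + t * ν (y + z) :=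
      Kf_le Y ν hν0 ht (Y.add_mem hy hz)
    have h2 : ‖x + x' - (y + z)‖ ≤ ‖x - y‖ + ‖x' - z‖ := by
      have he : x + x' - (y + z) = (x - y) + (x' - z) := by abel
      rw [he]; exact norm_add_le _ _
    have h3 : ν (y + z) ≤ κ * (ν y + ν z) := hνt y hy z hz
    have h4 : t * ν (y + z) ≤ t * (κ * (ν y + ν z)) :=
      mul_le_mul_of_nonneg_left h3 ht
    nlinarith [hν0 y hy, hν0 z hz, norm_nonneg (x - y), norm_nonneg (x' - z),
      mul_nonneg ht (hν0 y hy), mul_nonneg ht (hν0 z hz)]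
  have step : ∀ r ∈ {r : ℝ | ∃ y ∈ Y, r = ‖x - y‖ + t * ν y},
      Kf Y ν (x + x') t / κ - r ≤ Kf Y ν x' t := by
    intro r hr
    refine le_csInf (Kf_set_nonempty Y ν x' t) fun r' hr' => ?_
    rw [sub_le_iff_le_add, div_le_iff₀ hκ0]
    calc Kf Y ν (x + x') t ≤ κ * (r + r') := key r hr r' hr'
      _ = (r' + r) * κ := by ring
  have step2 : Kf Y ν (x + x') t / κ - Kf Y ν x' t ≤ Kf Y ν x t := by
    refine le_csInf (Kf_set_nonempty Y ν x t) fun r hr => ?_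
    have := step r hr
    linarith
  have h5 : Kf Y ν (x + x') t / κ ≤ Kf Y ν x t + Kf Y ν x' t := by linarith
  rw [div_le_iff₀ hκ0] at h5
  calc Kf Y ν (x + x') t ≤ (Kf Y ν x t + Kf Y ν x' t) * κ := h5
    _ = κ * (Kf Y ν x t + Kf Y ν x' t) := by ring

end Aux

theorem stmt_15 {X : Type*} [NormedAddCommGroup X] [NormedSpace ℝ X] [CompleteSpace X]
    (Y : Submodule ℝ X) (ν : X → ℝ)
    -- `ν` is a quasi-semi-norm on `Y`:
    (hν0 : ∀ y ∈ Y, 0 ≤ ν y)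
    (hνh : ∀ (c : ℝ), ∀ y ∈ Y, ν (c • y) = |c| * ν y)
    (hνt : ∃ κ : ℝ, 1 ≤ κ ∧ ∀ y ∈ Y, ∀ z ∈ Y, ν (y + z) ≤ κ * (ν y + ν z))
    -- condition (a): `sup_{‖x‖=1} K(x,t) > c` for all `t ∈ (0,1]`:
    (h : ∃ c > (0 : ℝ), ∀ t ∈ Set.Ioc (0 : ℝ) 1, c < Ksup Y ν t) :
    ∀ b : ℕ → ℝ, (∀ n, 0 ≤ b n) → Tendsto b atTop atTop →
    ∀ t : ℕ → ℝ, StrictAnti t → (∀ n, 0 < t n) → Tendsto t atTop (nhds 0) →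
      {x : X | ∃ M : ℝ, ∀ n, b n * Kf Y ν x (t n) ≤ M} ≠ Set.univ := by
  intro b hb0 hb t ht_anti ht_pos ht0 hcon
  obtain ⟨c, hc, hK⟩ := h
  obtain ⟨κ, hκ1, hκ⟩ := hνt
  have hκ0 : (0 : ℝ) < κ := lt_of_lt_of_le one_pos hκ1
  set f : ℕ → Set X := fun m => {x | ∀ n, b n * Kf Y ν x (t n) ≤ m} with hf
  have hclosed : ∀ m, IsClosed (f m) := by
    intro m
    have he : f m = ⋂ n, {x : X | b n * Kf Y ν x (t n) ≤ m} := by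
      ext x; simp [hf, Set.mem_iInter]
    rw [he]
    exact isClosed_iInter fun n =>
      isClosed_le (continuous_const.mul (Kf_continuous Y ν hν0 (ht_pos n).le))
        continuous_const
  have hunion : ⋃ m, f m = Set.univ := by
    ext x
    simp only [Set.mem_iUnion, Set.mem_univ, iff_true]
    have hx : x ∈ {x : X | ∃ M : ℝ, ∀ n, b n * Kf Y ν x (t n) ≤ M} := by
      rw [hcon]; exact Set.mem_univ x
    obtain ⟨M, hM⟩ := hx
    exact ⟨⌈M⌉₊, fun n => (hM n).trans (Nat.le_ceil M)⟩
  obtain ⟨m, x0, hx0⟩ := nonempty_interior_of_iUnion_of_closed hclosed hunion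
  obtain ⟨r, hr, hball⟩ := Metric.mem_nhds_iff.mp (mem_interior_iff_mem_nhds.mp hx0)
  have hx0f : x0 ∈ f m := hball (Metric.mem_ball_self hr)
  have hr2 : (0 : ℝ) < r / 2 := by linarith
  -- the key quantitative bound
  have hbound : ∀ n, t n ≤ 1 → b n * (r / 2 * c) ≤ 2 * κ * m := by
    intro n hn
    have hx : ∃ x : X, ‖x‖ = 1 ∧ c < Kf Y ν x (t n) := by
      by_contra hcon'
      push_neg at hcon'
      have hle : Ksup Y ν (t n) ≤ c := by
        refine Real.sSup_le ?_ hc.le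
        rintro rr ⟨x, hx1, rfl⟩
        exact hcon' x hx1
      exact absurd (hK (t n) ⟨ht_pos n, hn⟩) (not_lt.mpr hle)
    obtain ⟨x, hx1, hxc⟩ := hx
    set z := (r / 2) • x with hz
    have hzn : ‖z‖ = r / 2 := by
      rw [hz, norm_smul, hx1, Real.norm_eq_abs, abs_of_pos hr2, mul_one]
    have hzball : x0 + z ∈ Metric.ball x0 r := by
      rw [Metric.mem_ball, dist_eq_norm]
      have : x0 + z - x0 = z := by abel
      rw [this, hzn]; linarith
    have h1 : b n * Kf Y ν (x0 + z) (t n) ≤ m := hball hzball n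
    have h2 : b n * Kf Y ν x0 (t n) ≤ m := hx0f n
    have harg : (x0 + z) + (-1 : ℝ) • x0 = z := by
      rw [neg_smul, one_smul]; abel
    have h3 := Kf_add_le Y ν hν0 hκ1 hκ (x0 + z) ((-1 : ℝ) • x0) (ht_pos n).le
    rw [harg] at h3
    have h4 : Kf Y ν ((-1 : ℝ) • x0) (t n) ≤ Kf Y ν x0 (t n) := by
      have := Kf_smul_le Y ν hν0 hνh (-1) x0 (ht_pos n).le
      simpa using this
    have h5 : Kf Y ν x (t n) ≤ (r / 2)⁻¹ * Kf Y ν z (t n) := by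
      have hsm := Kf_smul_le Y ν hν0 hνh (r / 2)⁻¹ z (ht_pos n).le
      have hxz : (r / 2)⁻¹ • z = x := by
        rw [hz, smul_smul, inv_mul_cancel₀ (ne_of_gt hr2), one_smul]
      rw [hxz, abs_of_pos (inv_pos.mpr hr2)] at hsm
      exact hsm
    -- combine: (r/2) * Kf x ≤ Kf z ≤ κ (Kf (x0+z) + Kf x0)
    have h6 : r / 2 * Kf Y ν x (t n) ≤ Kf Y ν z (t n) := by
      have hm := mul_le_mul_of_nonneg_left h5 hr2.le
      rwa [← mul_assoc, mul_inv_cancel₀ (ne_of_gt hr2), one_mul] at hm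
    have h7 : Kf Y ν z (t n) ≤ κ * (Kf Y ν (x0 + z) (t n) + Kf Y ν x0 (t n)) := by
      calc Kf Y ν z (t n)
          ≤ κ * (Kf Y ν (x0 + z) (t n) + Kf Y ν ((-1 : ℝ) • x0) (t n)) := h3
        _ ≤ κ * (Kf Y ν (x0 + z) (t n) + Kf Y ν x0 (t n)) := by nlinarith
    have h8 : b n * (r / 2 * Kf Y ν x (t n)) ≤
        b n * (κ * (Kf Y ν (x0 + z) (t n) + Kf Y ν x0 (t n))) :=
      mul_le_mul_of_nonneg_left (h6.trans h7) (hb0 n)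
    have h9 : b n * (κ * (Kf Y ν (x0 + z) (t n) + Kf Y ν x0 (t n)))
        = κ * (b n * Kf Y ν (x0 + z) (t n) + b n * Kf Y ν x0 (t n)) := by ring
    have h10 : b n * (r / 2 * c) ≤ b n * (r / 2 * Kf Y ν x (t n)) := by
      apply mul_le_mul_of_nonneg_left _ (hb0 n)
      exact mul_le_mul_of_nonneg_left hxc.le hr2.le
    have h11 : κ * (b n * Kf Y ν (x0 + z) (t n) + b n * Kf Y ν x0 (t n))
        ≤ κ * (m + m) := by
      apply mul_le_mul_of_nonneg_left _ hκ0.le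
      linarith
    calc b n * (r / 2 * c) ≤ b n * (r / 2 * Kf Y ν x (t n)) := h10
      _ ≤ κ * (b n * Kf Y ν (x0 + z) (t n) + b n * Kf Y ν x0 (t n)) := by
          rw [← h9]; exact h8
      _ ≤ κ * (m + m) := h11
      _ = 2 * κ * m := by ring
  -- derive a contradiction with b n → ∞
  have hrc : (0 : ℝ) < r / 2 * c := mul_pos hr2 hc
  have hB : ∀ᶠ n in atTop, (2 * κ * m) / (r / 2 * c) < b n :=
    hb.eventually_gt_atTop _
  have ht1 : ∀ᶠ n in atTop, t n < 1 := by
    have := ht0.eventually (eventually_lt_nhds (by norm_num : (0 : ℝ) < 1))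
    exact this
  obtain ⟨n, hn1, hn2⟩ := (hB.and ht1).exists
  have := hbound n hn2.le
  rw [← le_div_iff₀ hrc] at this
  linarith
end

section
/- Consider X = C[0,1] with the sup norm and Y = C¹[0,1] with norm ‖g‖ = ‖g‖_∞ + ‖g'‖_∞ (or ‖g'‖_∞). For every t ∈ (0,1/2) there exists f ∈ C[0,1] with ‖f‖_∞ = 1 such that K(f,t) ≥ 1/2, where K(f,t) = inf_{g∈C¹}(‖f−g‖_∞ + t‖g‖_{C¹}). Consequently sup_{‖f‖_∞=1} K(f,t) ≥ 1/2 for all t ∈ (0,1/2). -/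
/-- The Peetre `K`-functional for the couple `(C[0,1], C¹[0,1])`, where `C¹[0,1]` carries
the norm `‖g‖_∞ + ‖g'‖_∞`. -/
noncomputable def Kc (f : C(Set.Icc (0 : ℝ) 1, ℝ)) (t : ℝ) : ℝ :=
  sInf {r : ℝ | ∃ G : ℝ → ℝ, ContDiff ℝ 1 G ∧
    r = (⨆ x : Set.Icc (0 : ℝ) 1, |f x - G x|) +
      t * ((⨆ x : Set.Icc (0 : ℝ) 1, |G x|) + ⨆ x : Set.Icc (0 : ℝ) 1, |deriv G x|)}

section Aux

variable {t : ℝ}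

noncomputable def ramp (t : ℝ) : ℝ → ℝ :=
  fun x => max (-1) (min 1 ((2 / t) * (x - 1/4) - 1))

lemma ramp_cont (t : ℝ) : Continuous (ramp t) := by
  unfold ramp; fun_prop

lemma ramp_abs_le (t : ℝ) (x : ℝ) : |ramp t x| ≤ 1 := by
  unfold ramp
  rw [abs_le]
  constructor
  · exact le_max_left _ _
  · exact max_le (by norm_num) (min_le_left _ _)

lemma ramp_at_a (ht : 0 < t) : ramp t (1/4) = -1 := by
  unfold ramp
  norm_num

lemma ramp_at_b (ht : 0 < t) : ramp t (1/4 + t) = 1 := by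
  unfold ramp
  have h : (2 / t) * ((1/4 + t) - 1/4) - 1 = 1 := by
    field_simp
    norm_num
    ring
  rw [h]
  norm_num

noncomputable def fc (t : ℝ) : C(Set.Icc (0 : ℝ) 1, ℝ) :=
  ⟨fun x => ramp t x, (ramp_cont t).comp continuous_subtype_val⟩

lemma key (ht : 0 < t) (ht2 : t < 1/2) : ‖fc t‖ = 1 ∧ 1/2 ≤ Kc (fc t) t := by
  have ha : (1/4 : ℝ) ∈ Set.Icc (0:ℝ) 1 := by constructor <;> norm_num
  have hb : (1/4 + t : ℝ) ∈ Set.Icc (0:ℝ) 1 := by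
    constructor <;> nlinarith
  have hnorm : ‖fc t‖ = 1 := by
    apply le_antisymm
    · exact (ContinuousMap.norm_le _ zero_le_one).mpr fun x => by
        simpa [fc, Real.norm_eq_abs] using ramp_abs_le t x
    · calc (1:ℝ) = ‖fc t ⟨_, hb⟩‖ := by
            show (1:ℝ) = |ramp t (1/4 + t)|
            rw [ramp_at_b ht]; norm_num
        _ ≤ ‖fc t‖ := ContinuousMap.norm_coe_le_norm _ _
  refine ⟨hnorm, le_csInf ⟨_, ⟨(fun _ => 0), contDiff_const, rfl⟩⟩ ?_⟩
  rintro r ⟨G, hG, rfl⟩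
  set E := ⨆ x : Set.Icc (0 : ℝ) 1, |fc t x - G x| with hE
  have hGc : Continuous G := hG.continuous
  have hG' : Continuous (deriv G) := hG.continuous_deriv le_rfl
  have hbddE : BddAbove (Set.range fun x : Set.Icc (0:ℝ) 1 => |fc t x - G x|) :=
    (isCompact_range (((fc t).continuous.sub (hGc.comp continuous_subtype_val)).abs)).bddAbove
  have hbddD : BddAbove (Set.range fun x : Set.Icc (0:ℝ) 1 => |deriv G x|) :=
    (isCompact_range ((hG'.comp continuous_subtype_val).abs)).bddAbove
  have hS : 0 ≤ ⨆ x : Set.Icc (0:ℝ) 1, |G x| := Real.iSup_nonneg fun x => abs_nonneg _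
  have hD : 0 ≤ ⨆ x : Set.Icc (0:ℝ) 1, |deriv G x| := Real.iSup_nonneg fun x => abs_nonneg _
  have hEnn : 0 ≤ E := Real.iSup_nonneg fun x => abs_nonneg _
  by_cases hcase : 1/2 ≤ E
  · nlinarith
  push_neg at hcase
  -- G a ≤ -1 + E, G b ≥ 1 - E
  have hEa : |fc t ⟨_, ha⟩ - G (1/4)| ≤ E := le_ciSup hbddE ⟨_, ha⟩
  have hEb : |fc t ⟨_, hb⟩ - G (1/4 + t)| ≤ E := le_ciSup hbddE ⟨_, hb⟩
  rw [show fc t ⟨_, ha⟩ = ramp t (1/4) from rfl, ramp_at_a ht] at hEa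
  rw [show fc t ⟨_, hb⟩ = ramp t (1/4 + t) from rfl, ramp_at_b ht] at hEb
  have hGa : G (1/4) ≤ -1 + E := by
    have h := abs_le.mp hEa; linarith [h.1]
  have hGb : 1 - E ≤ G (1/4 + t) := by
    have h := abs_le.mp hEb; linarith [h.2]
  -- MVT
  have hab : (1/4 : ℝ) < 1/4 + t := by linarith
  obtain ⟨c, hc, hderiv⟩ := exists_deriv_eq_slope G hab (hGc.continuousOn)
    ((hG.differentiable one_ne_zero).differentiableOn)
  have hcmem : c ∈ Set.Icc (0:ℝ) 1 := ⟨by linarith [hc.1], by nlinarith [hc.2]⟩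
  have hslope : (2 - 2*E) / t ≤ deriv G c := by
    rw [hderiv]
    have h : (1/4 + t) - 1/4 = t := by ring
    rw [h]
    exact (div_le_div_iff_of_pos_right ht).mpr (by linarith)
  have hDc : deriv G c ≤ ⨆ x : Set.Icc (0:ℝ) 1, |deriv G x| :=
    (le_abs_self _).trans (le_ciSup hbddD ⟨c, hcmem⟩)
  have htD : 2 - 2*E ≤ t * (⨆ x : Set.Icc (0:ℝ) 1, |deriv G x|) := by
    have h1 : (2 - 2*E) / t ≤ ⨆ x : Set.Icc (0:ℝ) 1, |deriv G x| := hslope.trans hDc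
    calc 2 - 2*E = t * ((2 - 2*E)/t) := by field_simp
      _ ≤ t * _ := by apply mul_le_mul_of_nonneg_left h1 ht.le
  nlinarith

end Aux

theorem stmt_18 :
    ∀ t : ℝ, 0 < t → t < 1 / 2 →
      (∃ f : C(Set.Icc (0 : ℝ) 1, ℝ), ‖f‖ = 1 ∧ 1 / 2 ≤ Kc f t) ∧
      1 / 2 ≤ sSup {r : ℝ | ∃ f : C(Set.Icc (0 : ℝ) 1, ℝ), ‖f‖ = 1 ∧ r = Kc f t} := by
  intro t ht ht2
  obtain ⟨hnorm, hK⟩ := key ht (by linarith : t < 1/2)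
  refine ⟨⟨fc t, hnorm, hK⟩, ?_⟩
  have hbdd : BddAbove {r : ℝ | ∃ f : C(Set.Icc (0 : ℝ) 1, ℝ), ‖f‖ = 1 ∧ r = Kc f t} := by
    refine ⟨1, ?_⟩
    rintro r ⟨f, hf, rfl⟩
    have hmem : (⨆ x : Set.Icc (0:ℝ) 1, |f x - (0:ℝ)|) +
        t * ((⨆ x : Set.Icc (0:ℝ) 1, |(0:ℝ)|) +
          ⨆ x : Set.Icc (0:ℝ) 1, |deriv (fun _ : ℝ => (0:ℝ)) x|) ∈
        {r : ℝ | ∃ G : ℝ → ℝ, ContDiff ℝ 1 G ∧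
          r = (⨆ x : Set.Icc (0 : ℝ) 1, |f x - G x|) +
            t * ((⨆ x : Set.Icc (0 : ℝ) 1, |G x|) + ⨆ x : Set.Icc (0 : ℝ) 1, |deriv G x|)} :=
      ⟨fun _ => 0, contDiff_const, rfl⟩
    have hbb : BddBelow {r : ℝ | ∃ G : ℝ → ℝ, ContDiff ℝ 1 G ∧
          r = (⨆ x : Set.Icc (0 : ℝ) 1, |f x - G x|) +
            t * ((⨆ x : Set.Icc (0 : ℝ) 1, |G x|) + ⨆ x : Set.Icc (0 : ℝ) 1, |deriv G x|)} := by
      refine ⟨0, ?_⟩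
      rintro r ⟨G, hG, rfl⟩
      have h1 : 0 ≤ ⨆ x : Set.Icc (0:ℝ) 1, |f x - G x| := Real.iSup_nonneg fun x => abs_nonneg _
      have h2 : 0 ≤ ⨆ x : Set.Icc (0:ℝ) 1, |G x| := Real.iSup_nonneg fun x => abs_nonneg _
      have h3 : 0 ≤ ⨆ x : Set.Icc (0:ℝ) 1, |deriv G x| := Real.iSup_nonneg fun x => abs_nonneg _
      nlinarith
    have hle := csInf_le hbb hmem
    have heq : (⨆ x : Set.Icc (0:ℝ) 1, |f x - (0:ℝ)|) +
        t * ((⨆ x : Set.Icc (0:ℝ) 1, |(0:ℝ)|) +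
          ⨆ x : Set.Icc (0:ℝ) 1, |deriv (fun _ : ℝ => (0:ℝ)) x|) = 1 := by
      have hf1 : (⨆ x : Set.Icc (0:ℝ) 1, |f x - (0:ℝ)|) = ‖f‖ := by
        rw [ContinuousMap.norm_eq_iSup_norm]
        simp [Real.norm_eq_abs]
      simp only [deriv_const']
      rw [hf1, hf, abs_zero, ciSup_const]
      ring
    calc Kc f t ≤ _ := hle
      _ = 1 := heq
  exact (le_csSup hbdd ⟨fc t, hnorm, rfl⟩).trans' hK
end
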